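/- For every poset P, the interval monoid Int(P) is noetherian (both proper left divisibility and proper right divisibility are well-founded) if and only if for every x in P there is no infinite strictly descending chain in the set of elements ≥ x and no infinite strictly ascending chain in the set of elements ≤ x. Moreover, the atoms of Int(P) are then exactly the intervals [x,y] where y is an immediate successor of x. -/

import Mathlib

/-! Common definitions: multifractions, divisibility, interval monoids, zigzags. -/

section Defs

variable {M : Type*}

/-- A multifraction on a monoid `M`: a finite sequence with entries alternately in `M`
(sign `true`) and in a formal disjoint copy of `M` (sign `false`). -/
structure Multifraction (M : Type*) [Monoid M] where
  entries : List (Bool × M)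
  alt : entries.Chain' fun p q => p.1 ≠ q.1

/-- The product of two multifraction entry lists: merge the adjacent entries when they have
the same sign, concatenate otherwise. -/
def mfMul [Monoid M] (l₁ l₂ : List (Bool × M)) : List (Bool × M) :=
  match l₁.getLast?, l₂ with
  | some (b, x), (c, y) :: t =>
      if b = c then l₁.dropLast ++ (b, if b then x * y else y * x) :: t else l₁ ++ l₂
  | _, _ => l₁ ++ l₂

/-- The one-entry positive multifraction. -/
def mfPos [Monoid M] (x : M) : Multifraction M := ⟨[(true, x)], List.isChain_singleton _⟩

/-- The one-entry negative multifraction. -/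
def mfNeg [Monoid M] (x : M) : Multifraction M := ⟨[(false, x)], List.isChain_singleton _⟩

/-- `a` left divides `b`. -/
def LDvd [Monoid M] (a b : M) : Prop := ∃ c, a * c = b

/-- `a` right divides `b`. -/
def RDvd [Monoid M] (a b : M) : Prop := ∃ c, c * a = b

/-- `M` is (left and right) cancellative. -/
def Cancellative (M : Type*) [Monoid M] : Prop :=
  (∀ a b c : M, a * b = a * c → b = c) ∧ (∀ a b c : M, b * a = c * a → b = c)

/-- `1` is the only invertible element of `M`. -/
def TrivialUnits (M : Type*) [Monoid M] : Prop := ∀ a : M, IsUnit a → a = 1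

/-- Any two elements admit a left gcd. -/
def HasLeftGcds (M : Type*) [Monoid M] : Prop :=
  ∀ a b : M, ∃ d, LDvd d a ∧ LDvd d b ∧ ∀ e, LDvd e a → LDvd e b → LDvd e d

/-- Any two elements admit a right gcd. -/
def HasRightGcds (M : Type*) [Monoid M] : Prop :=
  ∀ a b : M, ∃ d, RDvd d a ∧ RDvd d b ∧ ∀ e, RDvd e a → RDvd e b → RDvd e d

/-- `M` is a gcd-monoid. -/
def GcdMonoidProp (M : Type*) [Monoid M] : Prop :=
  Cancellative M ∧ TrivialUnits M ∧ HasLeftGcds M ∧ HasRightGcds M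

/-- `m` is a right lcm of `u` and `v`. -/
def IsRightLcm [Monoid M] (u v m : M) : Prop :=
  LDvd u m ∧ LDvd v m ∧ ∀ w, LDvd u w → LDvd v w → LDvd m w

/-- `m` is a left lcm of `u` and `v`. -/
def IsLeftLcm [Monoid M] (u v m : M) : Prop :=
  RDvd u m ∧ RDvd v m ∧ ∀ w, RDvd u w → RDvd v w → RDvd m w

/-- `M` is a noetherian monoid: cancellative, with trivial units, and with well-founded
proper left and right divisibility. -/
def NoetherianMonoid (M : Type*) [Monoid M] : Prop :=
  Cancellative M ∧ TrivialUnits M ∧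
    WellFounded (fun a b : M => LDvd a b ∧ a ≠ b) ∧
    WellFounded (fun a b : M => RDvd a b ∧ a ≠ b)

/-- An atom of a monoid. -/
def MonAtom [Monoid M] (a : M) : Prop :=
  a ≠ 1 ∧ ∀ b c : M, a = b * c → b = 1 ∨ c = 1

/-- `η : M →* G` exhibits `G` as the enveloping (universal) group of `M`. -/
def IsEnvelopingGroup (M : Type*) [Monoid M] (G : Type*) [Group G] (η : M →* G) : Prop :=
  ∀ (H : Type*) [Group H] (f : M →* H), ∃! g : G →* H, g.comp η = f

/-- Evaluation of a multifraction in a group `G` through `η : M →* G`. -/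
def mfEval [Monoid M] {G : Type*} [Group G] (η : M →* G) (a : Multifraction M) : G :=
  (a.entries.map fun p => if p.1 then η p.2 else (η p.2)⁻¹).prod

/-- A multifraction is trivial if all its entries equal `1`. -/
def MfTrivial [Monoid M] (a : Multifraction M) : Prop := ∀ p ∈ a.entries, p.2 = 1

/-- `a` is a proper piece of `b` (relative to a monoid structure on multifractions). -/
def Piece [Monoid M] [Monoid (Multifraction M)] (a b : Multifraction M) : Prop :=
  ∃ c d : Multifraction M, b = c * a * d ∧ ¬(MfTrivial c ∧ MfTrivial d)

/-- The `j`-th entry of a multifraction (with default `(true, 1)`). -/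
def mfEntry [Monoid M] (a : Multifraction M) (j : ℕ) : Bool × M :=
  (a.entries[j]?).getD (true, 1)

/-- The reduction rule `R_{i,x}` (here `j = i - 1` is the 0-based level):
`b = a • R_{i,x}`. -/
def RedAt [Monoid M] (a b : Multifraction M) (j : ℕ) (x : M) : Prop :=
  b.entries.length = a.entries.length ∧ j + 1 < a.entries.length ∧
  (∀ k, ¬(j - 1 ≤ k ∧ k ≤ j + 1) → b.entries[k]? = a.entries[k]?) ∧
  (∀ k, (mfEntry b k).1 = (mfEntry a k).1) ∧
  (if (mfEntry a j).1 then
     if j = 0 then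
       (mfEntry b 0).2 * x = (mfEntry a 0).2 ∧ (mfEntry b 1).2 * x = (mfEntry a 1).2
     else ∃ x' : M,
       (mfEntry b (j - 1)).2 = x' * (mfEntry a (j - 1)).2 ∧
       (mfEntry b j).2 * x = x' * (mfEntry a j).2 ∧
       IsLeftLcm x (mfEntry a j).2 ((mfEntry b j).2 * x) ∧
       (mfEntry b (j + 1)).2 * x = (mfEntry a (j + 1)).2
   else
     if j = 0 then
       x * (mfEntry b 0).2 = (mfEntry a 0).2 ∧ x * (mfEntry b 1).2 = (mfEntry a 1).2
     else ∃ x' : M,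
       (mfEntry b (j - 1)).2 = (mfEntry a (j - 1)).2 * x' ∧
       x * (mfEntry b j).2 = (mfEntry a j).2 * x' ∧
       IsRightLcm x (mfEntry a j).2 (x * (mfEntry b j).2) ∧
       x * (mfEntry b (j + 1)).2 = (mfEntry a (j + 1)).2)

/-- One reduction step. -/
def Reduces [Monoid M] (a b : Multifraction M) : Prop := ∃ j x, x ≠ 1 ∧ RedAt a b j x

/-- A multifraction is reducible if some rule `R_{i,x}` with `x ≠ 1` applies to it. -/
def Reducible [Monoid M] (a : Multifraction M) : Prop := ∃ b, Reduces a b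

/-- Iterated reduction. -/
def ReducesStar [Monoid M] : Multifraction M → Multifraction M → Prop :=
  Relation.ReflTransGen Reduces

/-- Semi-convergence of reduction (relative to an enveloping group `η : M →* G`):
every unital multifraction reduces to a trivial one. -/
def SemiConvergent [Monoid M] {G : Type*} [Group G] (η : M →* G) : Prop :=
  ∀ a : Multifraction M, mfEval η a = 1 → ∃ b, ReducesStar a b ∧ MfTrivial b

end Defs

section Interval

variable (P : Type*) [PartialOrder P]

/-- The intervals of a poset `P`. -/
def Iv := {p : P × P // p.1 ≤ p.2}

/-- The defining relations of the interval monoid of `P`. -/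
def intervalRel : FreeMonoid (Iv P) → FreeMonoid (Iv P) → Prop := fun u v =>
  (∃ (x y z : P) (hxy : x ≤ y) (hyz : y ≤ z),
      u = FreeMonoid.of ⟨(x, z), hxy.trans hyz⟩ ∧
      v = FreeMonoid.of ⟨(x, y), hxy⟩ * FreeMonoid.of ⟨(y, z), hyz⟩) ∨
  (∃ x : P, u = FreeMonoid.of ⟨(x, x), le_refl x⟩ ∧ v = 1)

/-- The interval monoid of the poset `P`. -/
def IntervalMonoid := (conGen (intervalRel P)).Quotient

instance : Monoid (IntervalMonoid P) :=
  inferInstanceAs (Monoid (conGen (intervalRel P)).Quotient)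

variable {P}

/-- The generator `[x, y]` of the interval monoid. -/
def intv (I : Iv P) : IntervalMonoid P := (conGen (intervalRel P)).mk' (FreeMonoid.of I)

variable (P)

/-- `P` is a local lattice: each `P^{≥ x}` is a meet-semilattice and each `P^{≤ x}` is a
join-semilattice. -/
def LocalLattice : Prop :=
  (∀ x a b : P, x ≤ a → x ≤ b →
      ∃ m, x ≤ m ∧ m ≤ a ∧ m ≤ b ∧ ∀ c, x ≤ c → c ≤ a → c ≤ b → c ≤ m) ∧
  (∀ x a b : P, a ≤ x → b ≤ x →
      ∃ m, m ≤ x ∧ a ≤ m ∧ b ≤ m ∧ ∀ c, c ≤ x → a ≤ c → b ≤ c → m ≤ c)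

/-- Noetherianity conditions on the poset `P`: no infinite descending chain in any `P^{≥ x}`
and no infinite ascending chain in any `P^{≤ x}`. -/
def PosetNoethCond : Prop :=
  ∀ x : P, WellFounded (fun a b : {y : P // x ≤ y} => (a : P) < (b : P)) ∧
    WellFounded (fun a b : {y : P // y ≤ x} => (b : P) < (a : P))

variable {P}

/-- A simple multifraction on the interval monoid: each entry is a proper interval, and
consecutive entries share their target (at positive positions) or source (at negative ones). -/
def MfSimple (a : Multifraction (IntervalMonoid P)) : Prop :=
  ∃ l : List (Bool × Iv P),
    a.entries = l.map (fun p => (p.1, intv p.2)) ∧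
    (∀ p ∈ l, p.2.1.1 ≠ p.2.1.2) ∧
    l.Chain' fun p q => if p.1 then p.2.1.2 = q.2.1.2 else p.2.1.1 = q.2.1.1

/-- A positive `n`-zigzag in `P`. -/
def PosZigzag (n : ℕ) (x : ℕ → P) : Prop :=
  ∀ i ≤ n, i % 2 = 0 → (1 ≤ i → x i < x (i - 1)) ∧ (i < n → x i < x (i + 1))

/-- A negative `n`-zigzag in `P`. -/
def NegZigzag (n : ℕ) (x : ℕ → P) : Prop :=
  ∀ i ≤ n, i % 2 = 1 → (1 ≤ i → x i < x (i - 1)) ∧ (i < n → x i < x (i + 1))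

/-- The zigzag `x` is simple: `x₁, ..., xₙ` are pairwise distinct. -/
def SimpleZz (n : ℕ) (x : ℕ → P) : Prop :=
  ∀ i j, 1 ≤ i → i < j → j ≤ n → x i ≠ x j

/-- Reducibility of a zigzag at level `i`. -/
def ZzRedAt (n : ℕ) (x : ℕ → P) (i : ℕ) : Prop :=
  1 ≤ i ∧ i < n ∧
  ((2 ≤ i ∧ x i < x (i + 1) ∧
      ∃ y, x i < y ∧ y ≤ x (i + 1) ∧ ∃ u, x (i - 1) ≤ u ∧ y ≤ u) ∨
   (2 ≤ i ∧ x (i + 1) < x i ∧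
      ∃ y, x (i + 1) ≤ y ∧ y < x i ∧ ∃ u, u ≤ x (i - 1) ∧ u ≤ y) ∨
   (i = 1 ∧ x 0 < x 1 ∧ ∃ y, x 0 ≤ y ∧ y < x 1 ∧ x 2 ≤ y) ∨
   (i = 1 ∧ x 1 < x 0 ∧ ∃ y, x 1 < y ∧ y ≤ x 0 ∧ y ≤ x 2))

/-- A zigzag is reducible if it is reducible at some level. -/
def ZzReducible (n : ℕ) (x : ℕ → P) : Prop := ∃ i, ZzRedAt n x i

/-- The multifraction `a` is the image of the positive `n`-zigzag `x` under the map `F`. -/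
def PosImage (n : ℕ) (x : ℕ → P) (a : Multifraction (IntervalMonoid P)) : Prop :=
  a.entries.length = n ∧ ∀ j < n,
    if j % 2 = 0 then
      ∃ h : x j ≤ x (j + 1), a.entries[j]? = some (true, intv ⟨(x j, x (j + 1)), h⟩)
    else
      ∃ h : x (j + 1) ≤ x j, a.entries[j]? = some (false, intv ⟨(x (j + 1), x j), h⟩)

/-- The multifraction `a` is the image of the negative `n`-zigzag `x` under the map `F`. -/
def NegImage (n : ℕ) (x : ℕ → P) (a : Multifraction (IntervalMonoid P)) : Prop :=
  a.entries.length = n ∧ ∀ j < n,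
    if j % 2 = 0 then
      ∃ h : x (j + 1) ≤ x j, a.entries[j]? = some (false, intv ⟨(x (j + 1), x j), h⟩)
    else
      ∃ h : x j ≤ x (j + 1), a.entries[j]? = some (true, intv ⟨(x j, x (j + 1)), h⟩)

end Interval


/-! ### Auxiliary development: normal forms for the interval monoid -/

section NF

variable {P : Type*} [PartialOrder P]

/-- Merge two adjacent intervals. -/
def mergeIv (J I : Iv P) (h : J.1.2 = I.1.1) : Iv P :=
  ⟨(J.1.1, I.1.2), J.2.trans ((le_of_eq h).trans I.2)⟩

open Classical in
/-- Append one interval to a reduced word, merging or dropping as appropriate. -/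
noncomputable def istep (l : List (Iv P)) (I : Iv P) : List (Iv P) :=
  if I.1.1 = I.1.2 then l
  else l.getLast?.elim [I] fun J =>
    if h : J.1.2 = I.1.1 then l.dropLast ++ [mergeIv J I h] else l ++ [I]

lemma istep_triv (l : List (Iv P)) {I : Iv P} (h : I.1.1 = I.1.2) : istep l I = l := by
  simp [istep, h]

lemma istep_nil {I : Iv P} (h : I.1.1 ≠ I.1.2) : istep ([] : List (Iv P)) I = [I] := by
  simp [istep, h]

lemma istep_merge {m : List (Iv P)} {J I : Iv P} (h : I.1.1 ≠ I.1.2) (hJ : J.1.2 = I.1.1) :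
    istep (m ++ [J]) I = m ++ [mergeIv J I hJ] := by
  simp [istep, h, List.getLast?_concat, hJ]

lemma istep_app {m : List (Iv P)} {J I : Iv P} (h : I.1.1 ≠ I.1.2) (hJ : J.1.2 ≠ I.1.1) :
    istep (m ++ [J]) I = (m ++ [J]) ++ [I] := by
  simp [istep, h, List.getLast?_concat, hJ]

lemma mergeIv_proper {J I : Iv P} (hJI : J.1.2 = I.1.1) (hJ : J.1.1 ≠ J.1.2) :
    (mergeIv J I hJI).1.1 ≠ (mergeIv J I hJI).1.2 := by
  simp only [mergeIv]
  intro he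
  exact hJ (le_antisymm J.2 (hJI.le.trans (I.2.trans he.ge)))

lemma istep_mergeIv (l : List (Iv P)) (J I : Iv P) (hJI : J.1.2 = I.1.1)
    (hI : I.1.1 ≠ I.1.2) :
    istep l (mergeIv J I hJI) = istep (istep l J) I := by
  by_cases hJ : J.1.1 = J.1.2
  · have hmI : mergeIv J I hJI = I := Subtype.ext (by
      show (J.1.1, I.1.2) = I.1
      rw [hJ.trans hJI])
    rw [hmI, istep_triv l hJ]
  · have hprop := mergeIv_proper hJI hJ
    have hm1 : (mergeIv J I hJI).1.1 = J.1.1 := rfl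
    rcases l.eq_nil_or_concat with rfl | ⟨m, K, rfl⟩
    · rw [istep_nil hJ, istep_nil hprop]
      rw [show ([J] : List (Iv P)) = [] ++ [J] from rfl, istep_merge hI hJI]
      rfl
    · rw [List.concat_eq_append]
      by_cases hK : K.1.2 = J.1.1
      · rw [istep_merge hJ hK]
        have h2 : (mergeIv K J hK).1.2 = I.1.1 := hJI
        rw [istep_merge hI h2]
        have h3 : K.1.2 = (mergeIv J I hJI).1.1 := hK
        rw [istep_merge hprop h3]
        congr 1
      · rw [istep_app hJ hK]
        rw [istep_merge hI hJI]
        have h3 : K.1.2 ≠ (mergeIv J I hJI).1.1 := hK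
        rw [istep_app hprop h3]

lemma foldl_istep (l m : List (Iv P)) (I : Iv P) :
    List.foldl istep l (istep m I) = istep (List.foldl istep l m) I := by
  by_cases hI : I.1.1 = I.1.2
  · rw [istep_triv m hI, istep_triv _ hI]
  rcases m.eq_nil_or_concat with rfl | ⟨m0, J, rfl⟩
  · rw [istep_nil hI]; rfl
  · rw [List.concat_eq_append]
    by_cases hJ : J.1.2 = I.1.1
    · rw [istep_merge hI hJ, List.foldl_append, List.foldl_append]
      simp only [List.foldl_cons, List.foldl_nil]
      exact istep_mergeIv _ J I hJ hI
    · rw [istep_app hI hJ]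
      simp [List.foldl_append]

lemma foldl_foldl (m l k : List (Iv P)) :
    List.foldl istep l (List.foldl istep k m) = List.foldl istep (List.foldl istep l k) m := by
  induction m using List.reverseRecOn with
  | nil => rfl
  | append_singleton m a ih =>
      rw [List.foldl_append, List.foldl_append]
      simp only [List.foldl_cons, List.foldl_nil]
      rw [foldl_istep, ih]

end NF

section NF2

variable {P : Type*} [PartialOrder P]

/-- Normal form of a free-monoid word. -/
noncomputable def nrm (u : FreeMonoid (Iv P)) : List (Iv P) :=
  u.toList.foldl istep []

lemma nrm_mul (u v : FreeMonoid (Iv P)) :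
    nrm (u * v) = List.foldl istep (nrm u) (nrm v) := by
  unfold nrm
  rw [FreeMonoid.toList_mul, List.foldl_append]
  exact (foldl_foldl v.toList (u.toList.foldl istep []) []).symm

/-- The kernel congruence of `nrm`. -/
noncomputable def nrmCon (P : Type*) [PartialOrder P] : Con (FreeMonoid (Iv P)) where
  r u v := nrm u = nrm v
  iseqv := ⟨fun _ => rfl, Eq.symm, Eq.trans⟩
  mul' h1 h2 := by
    show nrm _ = nrm _
    rw [nrm_mul, nrm_mul, h1, h2]

lemma nrm_of (I : Iv P) : nrm (FreeMonoid.of I) = istep [] I := by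
  show (FreeMonoid.toList (FreeMonoid.of I)).foldl istep [] = istep [] I
  rw [FreeMonoid.toList_of]
  rfl

lemma con_nrm_eq {u v : FreeMonoid (Iv P)} (h : conGen (intervalRel P) u v) :
    nrm u = nrm v := by
  have hbase : ∀ x y, intervalRel P x y → (nrmCon P) x y := by
    rintro x y (⟨a, b, c, hab, hbc, rfl, rfl⟩ | ⟨a, rfl, rfl⟩)
    · show nrm _ = nrm _
      erw [nrm_mul, nrm_of, nrm_of, nrm_of]
      by_cases hbc' : b = c
      · subst hbc'
        have h1 : istep ([] : List (Iv P)) ⟨(b, b), hbc⟩ = [] := istep_triv _ rfl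
        rw [h1]
        rfl
      · have hY : ((⟨(b, c), hbc⟩ : Iv P)).1.1 ≠ ((⟨(b, c), hbc⟩ : Iv P)).1.2 := hbc'
        rw [istep_nil hY]
        dsimp only [List.foldl]
        exact istep_mergeIv [] ⟨(a, b), hab⟩ ⟨(b, c), hbc⟩ rfl hbc'
    · show nrm _ = nrm _
      erw [nrm_of, istep_triv _ rfl]
      show _ = (FreeMonoid.toList (1 : FreeMonoid (Iv P))).foldl istep []
      rw [FreeMonoid.toList_one]
      rfl
  exact Con.conGen_le.2 hbase h

lemma mk'_of_split {x y z : P} (hxy : x ≤ y) (hyz : y ≤ z) :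
    (conGen (intervalRel P)).mk' (FreeMonoid.of ⟨(x, z), hxy.trans hyz⟩) =
      (conGen (intervalRel P)).mk' (FreeMonoid.of ⟨(x, y), hxy⟩ * FreeMonoid.of ⟨(y, z), hyz⟩) := by
  rw [Con.mk']
  exact (Con.eq _).2 (ConGen.Rel.of _ _ (Or.inl ⟨x, y, z, hxy, hyz, rfl, rfl⟩))

lemma mk'_of_triv (x : P) :
    (conGen (intervalRel P)).mk' (FreeMonoid.of ⟨(x, x), le_refl x⟩) = 1 := by
  have : (1 : (conGen (intervalRel P)).Quotient) = (conGen (intervalRel P)).mk' 1 :=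
    (map_one _).symm
  rw [this, Con.mk']
  exact (Con.eq _).2 (ConGen.Rel.of _ _ (Or.inr ⟨x, rfl, rfl⟩))

lemma mk'_istep (m : List (Iv P)) (I : Iv P) :
    (conGen (intervalRel P)).mk' (FreeMonoid.ofList (istep m I)) =
      (conGen (intervalRel P)).mk' (FreeMonoid.ofList m * FreeMonoid.of I) := by
  by_cases hI : I.1.1 = I.1.2
  · rw [istep_triv m hI, map_mul]
    have hIeq : I = (⟨(I.1.1, I.1.1), le_refl _⟩ : Iv P) :=
      Subtype.ext (Prod.ext_iff.mpr ⟨rfl, hI.symm⟩)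
    rw [hIeq, mk'_of_triv, mul_one]
  rcases m.eq_nil_or_concat with rfl | ⟨m0, J, rfl⟩
  · rw [istep_nil hI, FreeMonoid.ofList_singleton]
    congr 1
  · rw [List.concat_eq_append]
    by_cases hJ : J.1.2 = I.1.1
    · rw [istep_merge hI hJ, FreeMonoid.ofList_append, FreeMonoid.ofList_append,
        FreeMonoid.ofList_singleton, FreeMonoid.ofList_singleton, map_mul, map_mul, map_mul]
      have h3 : (⟨(J.1.2, I.1.2), hJ.le.trans I.2⟩ : Iv P) = I :=
        Subtype.ext (Prod.ext_iff.mpr ⟨hJ, rfl⟩)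
      have this1 := mk'_of_split (P := P) J.2 (hJ.le.trans I.2)
      rw [h3, map_mul] at this1
      rw [mul_assoc]
      exact congrArg (fun t => (conGen (intervalRel P)).mk' (FreeMonoid.ofList m0) * t) this1
    · rw [istep_app hI hJ, FreeMonoid.ofList_append, FreeMonoid.ofList_singleton, map_mul]

lemma mk'_nrm_list (l : List (Iv P)) :
    (conGen (intervalRel P)).mk' (FreeMonoid.ofList (l.foldl istep [])) =
      (conGen (intervalRel P)).mk' (FreeMonoid.ofList l) := by
  induction l using List.reverseRecOn with
  | nil => rfl
  | append_singleton l a ih =>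
      rw [List.foldl_append]
      simp only [List.foldl_cons, List.foldl_nil]
      rw [mk'_istep, map_mul, ih, FreeMonoid.ofList_append, FreeMonoid.ofList_singleton, map_mul]

lemma mk'_nrm (u : FreeMonoid (Iv P)) :
    (conGen (intervalRel P)).mk' (FreeMonoid.ofList (nrm u)) = (conGen (intervalRel P)).mk' u := by
  have := mk'_nrm_list (P := P) u.toList
  rwa [FreeMonoid.ofList_toList] at this

lemma mk'_eq_iff {u v : FreeMonoid (Iv P)} :
    (conGen (intervalRel P)).mk' u = (conGen (intervalRel P)).mk' v ↔ nrm u = nrm v := by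
  constructor
  · intro h
    rw [Con.mk'] at h
    exact con_nrm_eq ((Con.eq _).1 h)
  · intro h
    rw [← mk'_nrm u, ← mk'_nrm v, h]

/-- Normal form of an element of the interval monoid. -/
noncomputable def nf (a : IntervalMonoid P) : List (Iv P) :=
  Con.liftOn a nrm fun _ _ h => con_nrm_eq h

lemma nf_mk' (u : FreeMonoid (Iv P)) : nf ((conGen (intervalRel P)).mk' u) = nrm u := rfl

lemma exists_rep (a : IntervalMonoid P) : ∃ u, (conGen (intervalRel P)).mk' u = a :=
  Con.mk'_surjective a

lemma nf_inj {a b : IntervalMonoid P} (h : nf a = nf b) : a = b := by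
  obtain ⟨u, rfl⟩ := exists_rep a
  obtain ⟨v, rfl⟩ := exists_rep b
  exact mk'_eq_iff.2 h

lemma nf_one : nf (1 : IntervalMonoid P) = [] := by
  have : (1 : IntervalMonoid P) = (conGen (intervalRel P)).mk' 1 := (map_one _).symm
  rw [this, nf_mk']
  show (FreeMonoid.toList 1).foldl istep [] = []
  rw [FreeMonoid.toList_one]
  rfl

lemma nf_mul (a b : IntervalMonoid P) : nf (a * b) = List.foldl istep (nf a) (nf b) := by
  obtain ⟨u, rfl⟩ := exists_rep a
  obtain ⟨v, rfl⟩ := exists_rep b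
  erw [← map_mul ((conGen (intervalRel P)).mk') u v, nf_mk', nf_mk', nf_mk', nrm_mul]

lemma mk'_nf (a : IntervalMonoid P) :
    (conGen (intervalRel P)).mk' (FreeMonoid.ofList (nf a)) = a := by
  obtain ⟨u, rfl⟩ := exists_rep a
  rw [nf_mk', mk'_nrm]

lemma nf_intv (I : Iv P) : nf (intv I) = istep [] I := by
  rw [intv, nf_mk', nrm_of]

end NF2

section NF3

variable {P : Type*} [PartialOrder P]

/-- A reduced word: proper intervals, no two adjacent intervals share an endpoint. -/
def RedW (l : List (Iv P)) : Prop :=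
  (∀ I ∈ l, I.1.1 ≠ I.1.2) ∧ l.Chain' (fun I J => I.1.2 ≠ J.1.1)

lemma redW_nil : RedW ([] : List (Iv P)) := ⟨by simp, List.isChain_nil⟩

lemma redW_istep {l : List (Iv P)} (h : RedW l) (I : Iv P) : RedW (istep l I) := by
  by_cases hI : I.1.1 = I.1.2
  · rwa [istep_triv l hI]
  rcases l.eq_nil_or_concat with rfl | ⟨m, K, rfl⟩
  · rw [istep_nil hI]
    exact ⟨by simpa using hI, List.isChain_singleton _⟩
  rw [List.concat_eq_append] at h ⊢
  obtain ⟨hmem, hch⟩ := h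
  rw [List.Chain', List.isChain_append] at hch
  by_cases hK : K.1.2 = I.1.1
  · rw [istep_merge hI hK]
    have hKp : K.1.1 ≠ K.1.2 := hmem K (by simp)
    refine ⟨?_, ?_⟩
    · intro J hJ
      rcases List.mem_append.1 hJ with hJ | hJ
      · exact hmem J (List.mem_append.2 (Or.inl hJ))
      · simp only [List.mem_singleton] at hJ
        subst hJ
        exact mergeIv_proper hK hKp
    · rw [List.Chain', List.isChain_append]
      exact ⟨hch.1, List.isChain_singleton _, fun x hx y hy => by
        simp only [List.head?_cons, Option.mem_def, Option.some.injEq] at hy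
        subst hy
        exact hch.2.2 x hx K (by simp)⟩
  · rw [istep_app hI hK]
    refine ⟨?_, ?_⟩
    · intro J hJ
      rcases List.mem_append.1 hJ with hJ | hJ
      · exact hmem J hJ
      · simp only [List.mem_singleton] at hJ
        subst hJ
        exact hI
    · rw [List.Chain', List.isChain_append]
      refine ⟨List.isChain_append.2 hch, List.isChain_singleton _, fun x hx y hy => by
        simp only [List.head?_cons, Option.mem_def, Option.some.injEq] at hy
        subst hy
        rw [List.getLast?_concat] at hx
        simp only [Option.mem_def, Option.some.injEq] at hx
        subst hx
        exact hK⟩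

lemma redW_foldl {l : List (Iv P)} (h : RedW l) (m : List (Iv P)) :
    RedW (List.foldl istep l m) := by
  induction m generalizing l with
  | nil => exact h
  | cons a m ih => exact ih (redW_istep h a)

lemma redW_nf (a : IntervalMonoid P) : RedW (nf a) := by
  obtain ⟨u, rfl⟩ := exists_rep a
  rw [nf_mk']
  exact redW_foldl redW_nil u.toList

/-- Shape of one normalization step on a proper interval. -/
lemma istep_shape {I : Iv P} (hI : I.1.1 ≠ I.1.2) (k : List (Iv P)) :
    istep k I = k ++ [I] ∨
      ∃ (m : List (Iv P)) (K : Iv P) (h : K.1.2 = I.1.1),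
        k = m ++ [K] ∧ istep k I = m ++ [mergeIv K I h] := by
  rcases k.eq_nil_or_concat with rfl | ⟨m, K, rfl⟩
  · exact Or.inl (istep_nil hI)
  rw [List.concat_eq_append]
  by_cases hK : K.1.2 = I.1.1
  · exact Or.inr ⟨m, K, hK, rfl, istep_merge hI hK⟩
  · exact Or.inl (istep_app hI hK)

lemma istep_ne_nil {I : Iv P} (hI : I.1.1 ≠ I.1.2) (k : List (Iv P)) : istep k I ≠ [] := by
  rcases istep_shape hI k with h | ⟨m, K, hK, _, h⟩ <;> simp [h]

lemma istep_getLast {I : Iv P} (hI : I.1.1 ≠ I.1.2) (k : List (Iv P)) :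
    ∀ Y ∈ (istep k I).getLast?, Y.1.2 = I.1.2 := by
  rcases istep_shape hI k with h | ⟨m, K, hK, hk, h⟩ <;>
    · rw [h, List.getLast?_concat]
      rintro Y ⟨rfl⟩
      rfl

/-- Folding a reduced word never merges except possibly at the first letter. -/
lemma foldl_no_merge :
    ∀ (t : List (Iv P)) (k : List (Iv P)),
      (∀ K ∈ k.getLast?, ∀ J ∈ t.head?, K.1.2 ≠ J.1.1) →
      (∀ J ∈ t, J.1.1 ≠ J.1.2) → t.Chain' (fun I J => I.1.2 ≠ J.1.1) →
      k ≠ [] → List.foldl istep k t = k ++ t := by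
  intro t
  induction t with
  | nil => intro k _ _ _ _; simp
  | cons J t ih =>
      intro k hlast hmem hch hk
      obtain ⟨m, K, rfl⟩ := (k.eq_nil_or_concat).resolve_left hk
      rw [List.concat_eq_append] at *
      have hKJ : K.1.2 ≠ J.1.1 := by
        refine hlast K ?_ J (by simp)
        rw [List.getLast?_concat]; rfl
      have hJp : J.1.1 ≠ J.1.2 := hmem J (by simp)
      rw [List.foldl_cons, istep_app hJp hKJ]
      rw [List.Chain', List.isChain_cons] at hch
      have := ih ((m ++ [K]) ++ [J])
        (by
          rw [List.getLast?_concat]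
          rintro K' ⟨rfl⟩
          exact hch.1)
        (fun X hX => hmem X (by simp [hX])) hch.2 (by simp)
      rw [this]
      simp

lemma foldl_red_cons (k : List (Iv P)) {I : Iv P} {t : List (Iv P)} (hred : RedW (I :: t)) :
    List.foldl istep k (I :: t) = istep k I ++ t := by
  obtain ⟨hmem, hch⟩ := hred
  have hI : I.1.1 ≠ I.1.2 := hmem I (by simp)
  rw [List.foldl_cons]
  rw [List.Chain', List.isChain_cons] at hch
  exact foldl_no_merge t (istep k I)
    (fun K hK J hJ => by
      have := istep_getLast hI k K hK
      rw [this]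
      intro hIJ
      exact hch.1 J hJ hIJ)
    (fun J hJ => hmem J (by simp [hJ])) hch.2 (istep_ne_nil hI k)

/-- Normalization fixes reduced words. -/
lemma foldl_redW_id {l : List (Iv P)} (h : RedW l) : List.foldl istep [] l = l := by
  rcases l with _ | ⟨I, t⟩
  · rfl
  · rw [foldl_red_cons [] h, istep_nil (h.1 I (by simp))]
    rfl

end NF3

section NF4

variable {P : Type*} [PartialOrder P]

/-- The "prefix with possibly shrunken last letter" relation. -/
def PLE (l l' : List (Iv P)) : Prop :=
  (∃ r, l' = l ++ r) ∨
    ∃ (s : List (Iv P)) (I I' : Iv P) (r : List (Iv P)),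
      l = s ++ [I] ∧ l' = s ++ I' :: r ∧ I.1.1 = I'.1.1 ∧ I.1.2 ≤ I'.1.2

lemma ple_refl (l : List (Iv P)) : PLE l l := Or.inl ⟨[], by simp⟩

lemma ple_istep {l m : List (Iv P)} (h : PLE l m) (I : Iv P) : PLE l (istep m I) := by
  by_cases hI : I.1.1 = I.1.2
  · rwa [istep_triv m hI]
  rcases istep_shape hI m with hm | ⟨m0, K, hK, hm0, hm⟩
  · rw [hm]
    rcases h with ⟨r, rfl⟩ | ⟨s, I0, I0', r, h1, h2, h3, h4⟩
    · exact Or.inl ⟨r ++ [I], by rw [List.append_assoc]⟩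
    · exact Or.inr ⟨s, I0, I0', r ++ [I], h1, by rw [h2]; simp, h3, h4⟩
  · rw [hm]
    rcases h with ⟨r, hr⟩ | ⟨s, I0, I0', r, h1, h2, h3, h4⟩
    · rcases r.eq_nil_or_concat with rfl | ⟨r0, Z, rfl⟩
      · rw [List.append_nil] at hr
        exact Or.inr ⟨m0, K, mergeIv K I hK, [], hr.symm.trans hm0, rfl, rfl,
          hK.le.trans I.2⟩
      · rw [List.concat_eq_append, ← List.append_assoc] at hr
        obtain ⟨h5, h6⟩ := List.append_inj' (hr.symm.trans hm0) rfl
        have hZ : Z = K := by simpa using h6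
        exact Or.inl ⟨r0 ++ [mergeIv K I hK], by rw [← h5, List.append_assoc]⟩
    · rcases r.eq_nil_or_concat with rfl | ⟨r0, Z, rfl⟩
      · have h2' : s ++ [I0'] = m0 ++ [K] := h2.symm.trans hm0
        obtain ⟨h5, h6⟩ := List.append_inj' h2' rfl
        have hZ : I0' = K := by simpa using h6
        refine Or.inr ⟨s, I0, mergeIv K I hK, [], h1, by rw [h5], ?_, ?_⟩
        · rw [h3, hZ]; rfl
        · calc I0.1.2 ≤ I0'.1.2 := h4
            _ = K.1.2 := by rw [hZ]
            _ ≤ I.1.2 := hK.le.trans I.2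
      · rw [List.concat_eq_append] at h2
        have h2' : (s ++ I0' :: r0) ++ [Z] = m0 ++ [K] := by
          rw [← hm0, h2]; simp
        obtain ⟨h5, h6⟩ := List.append_inj' h2' rfl
        have hZ : Z = K := by simpa using h6
        exact Or.inr ⟨s, I0, I0', r0 ++ [mergeIv K I hK], h1, by rw [← h5]; simp, h3, h4⟩

lemma ple_foldl (l : List (Iv P)) (m : List (Iv P)) : PLE l (List.foldl istep l m) := by
  suffices h : ∀ m k, PLE l k → PLE l (List.foldl istep k m) from h m l (ple_refl l)
  intro m
  induction m with
  | nil => exact fun k h => h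
  | cons a m ih => exact fun k h => ih (istep k a) (ple_istep h a)

lemma ldvd_ple {a b : IntervalMonoid P} (h : LDvd a b) : PLE (nf a) (nf b) := by
  obtain ⟨c, rfl⟩ := h
  rw [nf_mul]
  exact ple_foldl _ _

lemma rdvd_shape {a b : IntervalMonoid P} (h : RDvd a b) (hne : a ≠ b) :
    (∃ r, r ≠ [] ∧ nf b = r ++ nf a) ∨
      ∃ (r : List (Iv P)) (I I' : Iv P) (t : List (Iv P)),
        nf a = I :: t ∧ nf b = r ++ I' :: t ∧ I'.1.2 = I.1.2 ∧ I'.1.1 < I.1.1 := by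
  obtain ⟨c, rfl⟩ := h
  rw [nf_mul]
  have hred := redW_nf a
  rcases hnfa : nf a with _ | ⟨I, t⟩
  · left
    refine ⟨nf c, ?_, by simp⟩
    intro hc
    apply hne
    apply nf_inj
    rw [nf_mul, hnfa, hc]
    rfl
  · rw [← hnfa]
    rw [hnfa] at hred
    rw [hnfa, foldl_red_cons (nf c) hred]
    have hI : I.1.1 ≠ I.1.2 := hred.1 I (by simp)
    rcases istep_shape hI (nf c) with hm | ⟨m0, K, hK, hm0, hm⟩
    · rw [hm]
      left
      refine ⟨nf c, ?_, by simp⟩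
      intro hc
      apply hne
      apply nf_inj
      rw [nf_mul, hnfa, hc, foldl_red_cons [] hred, istep_nil hI]
      rfl
    · rw [hm]
      right
      have hKp : K.1.1 ≠ K.1.2 := (redW_nf c).1 K (by rw [hm0]; simp)
      exact ⟨m0, I, mergeIv K I hK, t, rfl, by simp, rfl,
        lt_of_lt_of_eq (lt_of_le_of_ne K.2 hKp) hK⟩

lemma eq_one_of_nf_nil {a : IntervalMonoid P} (h : nf a = []) : a = 1 :=
  nf_inj (h.trans nf_one.symm)

end NF4

section NF5

variable {P : Type*} [PartialOrder P]

lemma wf_L (hP : PosetNoethCond P) :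
    WellFounded (fun a b : IntervalMonoid P => LDvd a b ∧ a ≠ b) := by
  have key : ∀ (n : ℕ) (b : IntervalMonoid P), (nf b).length ≤ n →
      Acc (fun a b : IntervalMonoid P => LDvd a b ∧ a ≠ b) b := by
    intro n
    induction n with
    | zero =>
        intro b hb
        have hb0 : nf b = [] := List.eq_nil_of_length_eq_zero (Nat.le_zero.1 hb)
        constructor
        rintro a ⟨hd, hne⟩
        rcases ldvd_ple hd with ⟨r, hr⟩ | ⟨s, I, I', r, h1, h2, h3, h4⟩
        · rw [hb0] at hr
          have : nf a = [] := by
            rcases List.append_eq_nil_iff.1 hr.symm with ⟨h, -⟩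
            exact h
          exact absurd (nf_inj (this.trans hb0.symm)) hne
        · rw [hb0] at h2
          exact absurd h2.symm (by simp)
    | succ n ih =>
        intro b hb
        rcases Nat.lt_or_ge (nf b).length (n + 1) with hlt | hge
        · exact ih b (Nat.lt_succ_iff.1 hlt)
        have hlen : (nf b).length = n + 1 := le_antisymm hb hge
        rcases (nf b).eq_nil_or_concat with hnil | ⟨s, I, hsI⟩
        · rw [hnil] at hlen; simp at hlen
        rw [List.concat_eq_append] at hsI
        have hslen : s.length = n := by
          have := congrArg List.length hsI
          simp at this
          omega
        have inner : ∀ z : {z : P // I.1.1 ≤ z}, ∀ b' : IntervalMonoid P,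
            nf b' = s ++ ([⟨(I.1.1, z.1), z.2⟩] : List (Iv P)) →
            Acc (fun a b : IntervalMonoid P => LDvd a b ∧ a ≠ b) b' := by
          intro z
          refine (hP I.1.1).1.induction
            (C := fun z => ∀ b' : IntervalMonoid P,
              nf b' = s ++ ([⟨(I.1.1, z.1), z.2⟩] : List (Iv P)) →
              Acc (fun a b : IntervalMonoid P => LDvd a b ∧ a ≠ b) b') z ?_
          rintro z ihz b' hb'
          constructor
          rintro a ⟨hd, hne⟩
          have hple := ldvd_ple hd
          rw [hb'] at hple
          rcases hple with ⟨r, hr⟩ | ⟨s', I0, I0', r, h1, h2, h3, h4⟩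
          · rcases r.eq_nil_or_concat with rfl | ⟨r0, Z, rfl⟩
            · rw [List.append_nil] at hr
              exact absurd (nf_inj (hr.symm.trans hb'.symm)) hne
            · have hlena : (nf a).length ≤ n := by
                have := congrArg List.length hr
                simp at this
                have hc1 : ([⟨(I.1.1, z.1), z.2⟩] : List (Iv P)).length = 1 := rfl
                omega
              exact ih a hlena
          · rcases r.eq_nil_or_concat with rfl | ⟨r0, Z, rfl⟩
            · have h2' : s' ++ [I0'] = s ++ ([⟨(I.1.1, z.1), z.2⟩] : List (Iv P)) := h2.symm
              obtain ⟨h5, h6⟩ := List.append_inj' h2' rfl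
              have h7 : I0' = (⟨(I.1.1, z.1), z.2⟩ : Iv P) := List.singleton_inj.mp h6
              have hI01 : I0.1.1 = I.1.1 := by rw [h3, h7]
              have hI02 : I0.1.2 ≤ z.1 := by
                have := h4
                rw [h7] at this
                exact this
              by_cases hzz : I0.1.2 = z.1
              · exfalso
                apply hne
                apply nf_inj
                rw [h1, hb', h5]
                congr 1
                congr 1
                exact Subtype.ext (Prod.ext_iff.mpr ⟨hI01, hzz⟩)
              · have hI0le : I.1.1 ≤ I0.1.2 := hI01 ▸ I0.2
                refine ihz ⟨I0.1.2, hI0le⟩ (lt_of_le_of_ne hI02 hzz) a ?_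
                rw [h1, h5]
                congr 2
                exact Subtype.ext (Prod.ext_iff.mpr ⟨hI01, rfl⟩)
            · have hlena : (nf a).length ≤ n := by
                have e1 := congrArg List.length h1
                have e2 := congrArg List.length h2
                have e3 := congrArg List.length hb'
                simp at e1 e2 e3
                have hc1 : ([⟨(I.1.1, z.1), z.2⟩] : List (Iv P)).length = 1 := rfl
                omega
              exact ih a hlena
        have hb_eq : nf b = s ++ ([⟨(I.1.1, I.1.2), I.2⟩] : List (Iv P)) := hsI
        exact inner ⟨I.1.2, I.2⟩ b hb_eq
  exact WellFounded.intro fun b => key (nf b).length b le_rfl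

lemma wf_R (hP : PosetNoethCond P) :
    WellFounded (fun a b : IntervalMonoid P => RDvd a b ∧ a ≠ b) := by
  have key : ∀ (n : ℕ) (b : IntervalMonoid P), (nf b).length ≤ n →
      Acc (fun a b : IntervalMonoid P => RDvd a b ∧ a ≠ b) b := by
    intro n
    induction n with
    | zero =>
        intro b hb
        have hb0 : nf b = [] := List.eq_nil_of_length_eq_zero (Nat.le_zero.1 hb)
        constructor
        rintro a ⟨hd, hne⟩
        rcases rdvd_shape hd hne with ⟨r, hr0, hr⟩ | ⟨r, I, I', t, h1, h2, h3, h4⟩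
        · rw [hb0] at hr
          exact absurd (List.append_eq_nil_iff.1 hr.symm).1 hr0
        · rw [hb0] at h2
          exact absurd h2.symm (by simp)
    | succ n ih =>
        intro b hb
        rcases Nat.lt_or_ge (nf b).length (n + 1) with hlt | hge
        · exact ih b (Nat.lt_succ_iff.1 hlt)
        have hlen : (nf b).length = n + 1 := le_antisymm hb hge
        rcases hnfb : nf b with hnil | ⟨J, t⟩
        · rw [hnfb] at hlen; simp at hlen
        have htlen : t.length = n := by
          rw [hnfb] at hlen; simpa using hlen
        have inner : ∀ z : {z : P // z ≤ J.1.2}, ∀ b' : IntervalMonoid P,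
            nf b' = (⟨(z.1, J.1.2), z.2⟩ : Iv P) :: t →
            Acc (fun a b : IntervalMonoid P => RDvd a b ∧ a ≠ b) b' := by
          intro z
          refine (hP J.1.2).2.induction
            (C := fun z => ∀ b' : IntervalMonoid P,
              nf b' = (⟨(z.1, J.1.2), z.2⟩ : Iv P) :: t →
              Acc (fun a b : IntervalMonoid P => RDvd a b ∧ a ≠ b) b') z ?_
          rintro z ihz b' hb'
          constructor
          rintro a ⟨hd, hne⟩
          rcases rdvd_shape hd hne with ⟨r, hr0, hr⟩ | ⟨r, I0, I0', t0, h1, h2, h3, h4⟩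
          · have hlena : (nf a).length ≤ n := by
              have e := congrArg List.length hr
              rw [hb'] at e
              simp at e
              have hr1 : 0 < r.length := List.length_pos_iff.2 hr0
              change t.length + 1 = _ at e
              omega
            exact ih a hlena
          · rcases r.eq_nil_or_concat with rfl | ⟨r0, Z, rfl⟩
            · simp only [List.nil_append] at h2
              rw [hb'] at h2
              injection h2 with h5 h6
              have hI02 : I0.1.2 = J.1.2 := by rw [← h3, ← h5]
              have hI01 : z.1 < I0.1.1 := by
                have := h4
                rw [← h5] at this
                exact this
              have hle : I0.1.1 ≤ J.1.2 := hI02 ▸ I0.2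
              refine ihz ⟨I0.1.1, hle⟩ hI01 a ?_
              rw [h1, ← h6]
              congr 1
              exact Subtype.ext (Prod.ext_iff.mpr ⟨rfl, hI02⟩)
            · have hlena : (nf a).length ≤ n := by
                have e1 := congrArg List.length h1
                have e2 := congrArg List.length h2
                have e3 := congrArg List.length hb'
                simp at e1 e2 e3
                change _ = t.length + 1 at e3
                omega
              exact ih a hlena
        have hb_eq : nf b = (⟨(J.1.1, J.1.2), J.2⟩ : Iv P) :: t := hnfb
        exact inner ⟨J.1.1, J.2⟩ b hb_eq
  exact WellFounded.intro fun b => key (nf b).length b le_rfl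

end NF5

section NF6

variable {P : Type*} [PartialOrder P]

lemma nf_intv_proper {I : Iv P} (h : I.1.1 ≠ I.1.2) : nf (intv I) = [I] := by
  rw [nf_intv, istep_nil h]

lemma intv_mul {x y z : P} (hxy : x ≤ y) (hyz : y ≤ z) :
    intv (⟨(x, y), hxy⟩ : Iv P) * intv (⟨(y, z), hyz⟩ : Iv P) =
      intv (⟨(x, z), hxy.trans hyz⟩ : Iv P) := by
  unfold intv
  exact (map_mul _ _ _).symm.trans (mk'_of_split hxy hyz).symm

lemma intv_ne_of_lt {x a b : P} (hxa : x ≤ a) (hxb : x ≤ b) (hab : a < b) :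
    intv (⟨(x, a), hxa⟩ : Iv P) ≠ intv (⟨(x, b), hxb⟩ : Iv P) := by
  intro he
  have hnf := congrArg nf he
  have hxb' : x ≠ b := (lt_of_le_of_lt hxa hab).ne
  erw [nf_intv, nf_intv, istep_nil (I := ⟨(x, b), hxb⟩) hxb'] at hnf
  by_cases hxa' : x = a
  · rw [istep_triv (I := ⟨(x, a), hxa⟩) _ hxa'] at hnf
    exact (List.cons_ne_nil _ _) hnf.symm
  · rw [istep_nil (I := ⟨(x, a), hxa⟩) hxa'] at hnf
    injection hnf with h1 _
    have : (x, a) = (x, b) := congrArg Subtype.val h1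
    exact hab.ne (congrArg Prod.snd this)

lemma intv_ne_of_lt' {x a b : P} (hax : a ≤ x) (hbx : b ≤ x) (hab : b < a) :
    intv (⟨(a, x), hax⟩ : Iv P) ≠ intv (⟨(b, x), hbx⟩ : Iv P) := by
  intro he
  have hnf := congrArg nf he
  have hbx' : b ≠ x := (lt_of_lt_of_le hab hax).ne
  erw [nf_intv, nf_intv, istep_nil (I := ⟨(b, x), hbx⟩) hbx'] at hnf
  by_cases hax' : a = x
  · rw [istep_triv (I := ⟨(a, x), hax⟩) _ hax'] at hnf
    exact (List.cons_ne_nil _ _) hnf.symm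
  · rw [istep_nil (I := ⟨(a, x), hax⟩) hax'] at hnf
    injection hnf with h1 _
    have : (a, x) = (b, x) := congrArg Subtype.val h1
    exact hab.ne (congrArg Prod.fst this).symm

lemma cond_of_wf (h1 : WellFounded fun a b : IntervalMonoid P => LDvd a b ∧ a ≠ b)
    (h2 : WellFounded fun a b : IntervalMonoid P => RDvd a b ∧ a ≠ b) :
    PosetNoethCond P := by
  intro x
  constructor
  · have hsub : Subrelation (fun a b : {y : P // x ≤ y} => (a : P) < (b : P))
        (InvImage (fun a b : IntervalMonoid P => LDvd a b ∧ a ≠ b)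
          (fun y : {y : P // x ≤ y} => intv (⟨(x, y.1), y.2⟩ : Iv P))) := by
      intro a b hab
      refine ⟨⟨intv (⟨(a.1, b.1), hab.le⟩ : Iv P), intv_mul a.2 hab.le⟩, ?_⟩
      exact intv_ne_of_lt a.2 b.2 hab
    exact Subrelation.wf hsub (InvImage.wf _ h1)
  · have hsub : Subrelation (fun a b : {y : P // y ≤ x} => (b : P) < (a : P))
        (InvImage (fun a b : IntervalMonoid P => RDvd a b ∧ a ≠ b)
          (fun y : {y : P // y ≤ x} => intv (⟨(y.1, x), y.2⟩ : Iv P))) := by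
      intro a b hab
      refine ⟨⟨intv (⟨(b.1, a.1), hab.le⟩ : Iv P), intv_mul hab.le a.2⟩, ?_⟩
      exact intv_ne_of_lt' a.2 b.2 hab
    exact Subrelation.wf hsub (InvImage.wf _ h2)

lemma intv_proper_ne_one {I : Iv P} (h : I.1.1 ≠ I.1.2) : intv I ≠ 1 := by
  intro he
  have := congrArg nf he
  rw [nf_intv_proper h, nf_one] at this
  simp at this

lemma atoms_iff (a : IntervalMonoid P) :
    MonAtom a ↔ ∃ (x y : P) (h : x ≤ y), x ⋖ y ∧ a = intv ⟨(x, y), h⟩ := by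
  constructor
  · rintro ⟨hne1, hfac⟩
    have hred := redW_nf a
    rcases hnfa : nf a with _ | ⟨I, t⟩
    · exact absurd (eq_one_of_nf_nil hnfa) hne1
    rw [hnfa] at hred
    have hI : I.1.1 ≠ I.1.2 := hred.1 I (by simp)
    have hmk : a = (conGen (intervalRel P)).mk' (FreeMonoid.ofList (I :: t)) := by
      rw [← hnfa, mk'_nf]
    rcases t with _ | ⟨J, t'⟩
    · refine ⟨I.1.1, I.1.2, I.2, ⟨lt_of_le_of_ne I.2 hI, fun z hz1 hz2 => ?_⟩, ?_⟩
      · have hsplit : a = intv (⟨(I.1.1, z), hz1.le⟩ : Iv P) *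
            intv (⟨(z, I.1.2), hz2.le⟩ : Iv P) := by
          rw [hmk, FreeMonoid.ofList_singleton]; unfold intv
          exact (mk'_of_split hz1.le hz2.le).trans (map_mul _ _ _)
        rcases hfac _ _ hsplit with h | h
        · exact intv_proper_ne_one (show I.1.1 ≠ z from hz1.ne) h
        · exact intv_proper_ne_one (show z ≠ I.1.2 from hz2.ne) h
      · rw [hmk, FreeMonoid.ofList_singleton]
        rfl
    · exfalso
      obtain ⟨c0, hc0⟩ : ∃ c0 : IntervalMonoid P,
          c0 = (conGen (intervalRel P)).mk' (FreeMonoid.ofList (J :: t')) := ⟨_, rfl⟩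
      have hsplit : a = intv I * c0 := by
        rw [hmk, hc0, intv]
        rw [show FreeMonoid.ofList (I :: J :: t') =
            FreeMonoid.of I * FreeMonoid.ofList (J :: t') from by
          rw [show (I :: J :: t') = [I] ++ (J :: t') from rfl, FreeMonoid.ofList_append,
            FreeMonoid.ofList_singleton]]
        exact map_mul _ _ _
      rcases hfac _ _ hsplit with h | h
      · exact intv_proper_ne_one hI h
      · have hnf2 : nf c0 = J :: t' := by
          rw [hc0, nf_mk']
          have he : nrm (FreeMonoid.ofList (J :: t')) = List.foldl istep [] (J :: t') := by
            rw [nrm, FreeMonoid.toList_ofList]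
          rw [he, foldl_redW_id (l := J :: t')
            ⟨fun X hX => hred.1 X (by simp [hX]), hred.2.tail⟩]
        have := congrArg nf h
        rw [hnf2, nf_one] at this
        simp at this
  · rintro ⟨x, y, hxy, hcov, rfl⟩
    have hxyne : x ≠ y := hcov.lt.ne
    refine ⟨intv_proper_ne_one (show x ≠ y from hxyne), ?_⟩
    intro b c hbc
    have hnf := congrArg nf hbc
    erw [nf_intv_proper (show x ≠ y from hxyne), nf_mul] at hnf
    rcases hnfc : nf c with _ | ⟨I, t⟩
    · exact Or.inr (eq_one_of_nf_nil hnfc)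
    have hredc := redW_nf c
    rw [hnfc] at hredc
    rw [hnfc, foldl_red_cons (nf b) hredc] at hnf
    have hI : I.1.1 ≠ I.1.2 := hredc.1 I (by simp)
    rcases istep_shape hI (nf b) with hm | ⟨m0, K, hK, hm0, hm⟩
    · rw [hm] at hnf
      left
      apply eq_one_of_nf_nil
      have hlen := congrArg List.length hnf
      simp at hlen
      change 1 = _ at hlen
      exact List.eq_nil_of_length_eq_zero (by omega)
    · exfalso
      rw [hm] at hnf
      have hlen := congrArg List.length hnf
      simp at hlen
      change 1 = _ at hlen
      have hm0nil : m0 = [] := List.eq_nil_of_length_eq_zero (by omega)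
      have htnil : t = [] := List.eq_nil_of_length_eq_zero (by omega)
      subst hm0nil
      subst htnil
      rw [List.nil_append] at hnf
      injection hnf with hA _
      have hval : (x, y) = (K.1.1, I.1.2) := congrArg Subtype.val hA
      have hx : x = K.1.1 := congrArg Prod.fst hval
      have hy : y = I.1.2 := congrArg Prod.snd hval
      have hKp : K.1.1 ≠ K.1.2 := (redW_nf b).1 K (by rw [hm0]; simp)
      have hz1 : x < K.1.2 := by
        rw [hx]
        exact lt_of_le_of_ne K.2 hKp
      have hz2 : K.1.2 < y := by
        rw [hy, hK]
        exact lt_of_le_of_ne I.2 hI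
      exact hcov.2 hz1 hz2

end NF6


/-- The interval monoid of `P` is noetherian iff every `P^{≥x}` has no infinite descending
chain and every `P^{≤x}` has no infinite ascending chain; and then the atoms of `Int(P)`
are exactly the elementary intervals `[x, y]` with `y` an immediate successor of `x`. -/
theorem intervalMonoid_noetherian_iff_and_atoms (P : Type*) [PartialOrder P] :
    ((WellFounded (fun a b : IntervalMonoid P => LDvd a b ∧ a ≠ b) ∧
      WellFounded (fun a b : IntervalMonoid P => RDvd a b ∧ a ≠ b)) ↔ PosetNoethCond P) ∧
    (PosetNoethCond P →
      ∀ a : IntervalMonoid P,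
        MonAtom a ↔ ∃ (x y : P) (h : x ≤ y), x ⋖ y ∧ a = intv ⟨(x, y), h⟩) := by
  constructor
  · constructor
    · rintro ⟨h1, h2⟩
      exact cond_of_wf h1 h2
    · intro h
      exact ⟨wf_L h, wf_R h⟩
  · intro _ a
    exact atoms_iff a
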